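/- Let a,b,c > 0 and let z,w ∈ ℂ with |z| = |w| = 1 and P(z,w) = 0. Then (z,w) = (1,1), and consequently a² + b² + c² = 2ab + 2bc + 2ac. That is, the intersection of the spectral curve {P = 0} with the unit torus 𝕋² = {(z,w) ∈ ℂ² : |z| = |w| = 1} is either empty or equal to the single real point (1,1). -/

import Mathlib

/-- The characteristic polynomial `P(z,w)` of the 1-2 model with parameters
`a`, `b`, `c`. -/
noncomputable def charPoly (a b c : ℝ) (z w : ℂ) : ℂ :=
  ((a ^ 4 + b ^ 4 + c ^ 4 + 6 * a ^ 2 * b ^ 2 + 6 * a ^ 2 * c ^ 2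
      + 6 * b ^ 2 * c ^ 2 : ℝ) : ℂ)
    - 2 * (a : ℂ) * (b : ℂ) * (z + 1 / z) * ((a ^ 2 + b ^ 2 - c ^ 2 : ℝ) : ℂ)
    - 2 * (a : ℂ) * (c : ℂ) * (w + 1 / w) * ((a ^ 2 + c ^ 2 - b ^ 2 : ℝ) : ℂ)
    - 2 * (b : ℂ) * (c : ℂ) * (z / w + w / z) * ((b ^ 2 + c ^ 2 - a ^ 2 : ℝ) : ℂ)

set_option maxHeartbeats 2000000 in
/-- Real form of the statement: the trigonometric polynomial is zero only at
`x = y = 1`, and then the parameters satisfy the criticality relation. -/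
lemma key_real (a b c x s y u : ℝ) (ha : 0 < a) (hb : 0 < b) (hc : 0 < c)
    (hx : x ^ 2 + s ^ 2 = 1) (hy : y ^ 2 + u ^ 2 = 1)
    (hE : a ^ 4 + b ^ 4 + c ^ 4 + 6 * a ^ 2 * b ^ 2 + 6 * a ^ 2 * c ^ 2
        + 6 * b ^ 2 * c ^ 2
        - 4 * a * b * (a ^ 2 + b ^ 2 - c ^ 2) * x
        - 4 * a * c * (a ^ 2 + c ^ 2 - b ^ 2) * y
        - 4 * b * c * (b ^ 2 + c ^ 2 - a ^ 2) * (x * y + s * u) = 0) :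
    x = 1 ∧ s = 0 ∧ y = 1 ∧ u = 0 ∧
      a ^ 2 + b ^ 2 + c ^ 2 = 2 * a * b + 2 * b * c + 2 * a * c := by
  obtain ⟨Q, hQdef⟩ : ∃ Q : ℝ, Q = 3 * a ^ 2 + b ^ 2 + c ^ 2
      - 2 * (a + b * x) * (a + c * y) - 2 * b * c * (s * u) := ⟨_, rfl⟩
  have id1 : (0 : ℝ)
      = Q ^ 2 + 4 * (b * (a + c * y) * s - c * (a + b * x) * u) ^ 2
        + 16 * a ^ 2 * b * c * (s * u) := by
    rw [hQdef]
    linear_combination (-1 : ℝ) * hE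
      + (-4*b^2*c^2*u^2 - 4*b^2*c^2*y^2 - 8*a*b^2*c*y - 4*a^2*b^2) * hx
      + (-4*b^2*c^2 - 8*a*b*c^2*x - 4*a^2*c^2) * hy
  have id2 : (0 : ℝ)
      = (Q + 4 * b * c * (s * u)) ^ 2
        + 4 * (b * (a + c * y) * s + c * (a + b * x) * u) ^ 2
        - 8 * (a ^ 2 + b ^ 2 + c ^ 2) * (b * c * (s * u)) := by
    rw [hQdef]
    linear_combination (-1 : ℝ) * hE
      + (-4*b^2*c^2*u^2 - 4*b^2*c^2*y^2 - 8*a*b^2*c*y - 4*a^2*b^2) * hx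
      + (-4*b^2*c^2 - 8*a*b*c^2*x - 4*a^2*c^2) * hy
  -- s * u must be 0
  have hsu : s * u = 0 := by
    rcases lt_trichotomy (s * u) 0 with h | h | h
    · exfalso
      have hX : (a ^ 2 + b ^ 2 + c ^ 2) * (b * c * (s * u)) < 0 :=
        mul_neg_of_pos_of_neg (by positivity) (mul_neg_of_pos_of_neg (mul_pos hb hc) h)
      linarith [sq_nonneg (Q + 4 * b * c * (s * u)),
        sq_nonneg (b * (a + c * y) * s + c * (a + b * x) * u), hX, id2]
    · exact h
    · exfalso
      have hX : 0 < a ^ 2 * (b * c * (s * u)) :=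
        mul_pos (by positivity) (mul_pos (mul_pos hb hc) h)
      linarith [sq_nonneg Q,
        sq_nonneg (b * (a + c * y) * s - c * (a + b * x) * u), hX, id1]
  rw [hsu] at id1
  have hsum : Q ^ 2 + 4 * (b * (a + c * y) * s - c * (a + b * x) * u) ^ 2 = 0 := by
    linarith [id1]
  have hQ : Q = 0 := by
    have h2 : Q ^ 2 = 0 := le_antisymm
      (by nlinarith [sq_nonneg (b * (a + c * y) * s - c * (a + b * x) * u)]) (sq_nonneg Q)
    exact pow_eq_zero_iff two_ne_zero |>.mp h2
  have hEa : b * (a + c * y) * s - c * (a + b * x) * u = 0 := by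
    have h2 : (b * (a + c * y) * s - c * (a + b * x) * u) ^ 2 = 0 := le_antisymm
      (by nlinarith [sq_nonneg Q]) (sq_nonneg _)
    exact pow_eq_zero_iff two_ne_zero |>.mp h2
  have hQ' : 3 * a ^ 2 + b ^ 2 + c ^ 2 = 2 * (a + b * x) * (a + c * y) := by
    rw [hQdef, hsu] at hQ; linarith
  -- show s = 0 and u = 0
  have hs0 : s = 0 ∧ u = 0 := by
    rcases mul_eq_zero.mp hsu with h | h
    · refine ⟨h, ?_⟩
      rw [h] at hEa
      have h2 : c * (a + b * x) * u = 0 := by linarith [hEa]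
      rcases mul_eq_zero.mp h2 with h3 | h3
      · rcases mul_eq_zero.mp h3 with h4 | h4
        · exact absurd h4 (ne_of_gt hc)
        · exfalso
          rw [h4] at hQ'
          nlinarith [sq_nonneg a, sq_nonneg b, sq_nonneg c]
      · exact h3
    · refine ⟨?_, h⟩
      rw [h] at hEa
      have h2 : b * (a + c * y) * s = 0 := by linarith [hEa]
      rcases mul_eq_zero.mp h2 with h3 | h3
      · rcases mul_eq_zero.mp h3 with h4 | h4
        · exact absurd h4 (ne_of_gt hb)
        · exfalso
          rw [h4] at hQ'
          nlinarith [sq_nonneg a, sq_nonneg b, sq_nonneg c]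
      · exact h3
  obtain ⟨hs, hu⟩ := hs0
  rw [hs] at hx; rw [hu] at hy
  have hx2 : (x - 1) * (x + 1) = 0 := by nlinarith
  have hy2 : (y - 1) * (y + 1) = 0 := by nlinarith
  have hxv : x = 1 ∨ x = -1 := by
    rcases mul_eq_zero.mp hx2 with h | h
    · left; linarith
    · right; linarith
  have hyv : y = 1 ∨ y = -1 := by
    rcases mul_eq_zero.mp hy2 with h | h
    · left; linarith
    · right; linarith
  rcases hxv with hx1 | hx1 <;> rcases hyv with hy1 | hy1
  · rw [hx1, hy1] at hQ'
    exact ⟨hx1, hs, hy1, hu, by nlinarith⟩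
  · exfalso; rw [hx1, hy1] at hQ'
    nlinarith [sq_nonneg (a - b), mul_pos hc (add_pos ha hb)]
  · exfalso; rw [hx1, hy1] at hQ'
    nlinarith [sq_nonneg (a - c), mul_pos hb (add_pos ha hc)]
  · exfalso; rw [hx1, hy1] at hQ'
    nlinarith [sq_nonneg (a + b + c), mul_pos hb hc, sq_nonneg (b - c),
      mul_pos ha (add_pos hb hc)]

set_option maxHeartbeats 1000000 in
/-- For `a,b,c > 0`, the spectral curve `{P = 0}` meets the
unit torus only possibly at the real point `(1,1)`, and in that case
`a² + b² + c² = 2ab + 2bc + 2ac`. -/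
theorem spectral_curve_unit_torus
    (a b c : ℝ) (ha : 0 < a) (hb : 0 < b) (hc : 0 < c)
    (z w : ℂ) (hz : ‖z‖ = 1) (hw : ‖w‖ = 1)
    (hP : charPoly a b c z w = 0) :
    z = 1 ∧ w = 1 ∧
      a ^ 2 + b ^ 2 + c ^ 2 = 2 * a * b + 2 * b * c + 2 * a * c := by
  have hz0 : z ≠ 0 := by
    intro h; rw [h] at hz; simp at hz
  have hw0 : w ≠ 0 := by
    intro h; rw [h] at hw; simp at hw
  have hzinv : 1 / z = (starRingEnd ℂ) z := by
    rw [one_div, Complex.inv_eq_conj hz]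
  have hwinv : 1 / w = (starRingEnd ℂ) w := by
    rw [one_div, Complex.inv_eq_conj hw]
  have h1 : z + 1 / z = ((2 * z.re : ℝ) : ℂ) := by
    rw [hzinv, Complex.add_conj]
  have h2 : w + 1 / w = ((2 * w.re : ℝ) : ℂ) := by
    rw [hwinv, Complex.add_conj]
  have h3 : z / w + w / z = ((2 * (z.re * w.re + z.im * w.im) : ℝ) : ℂ) := by
    have e1 : z / w = z * (starRingEnd ℂ) w := by
      rw [div_eq_mul_inv, ← one_div, hwinv]
    have e2 : w / z = (starRingEnd ℂ) (z * (starRingEnd ℂ) w) := by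
      rw [map_mul, Complex.conj_conj, mul_comm, div_eq_mul_inv, ← one_div, hzinv]
    rw [e1, e2, Complex.add_conj]
    have e3 : (z * (starRingEnd ℂ) w).re = z.re * w.re + z.im * w.im := by
      simp [Complex.mul_re]
    rw [e3]
  unfold charPoly at hP
  rw [h1, h2, h3] at hP
  have hPr0 : a ^ 4 + b ^ 4 + c ^ 4 + 6 * a ^ 2 * b ^ 2 + 6 * a ^ 2 * c ^ 2
      + 6 * b ^ 2 * c ^ 2
      - 2 * a * b * (2 * z.re) * (a ^ 2 + b ^ 2 - c ^ 2)
      - 2 * a * c * (2 * w.re) * (a ^ 2 + c ^ 2 - b ^ 2)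
      - 2 * b * c * (2 * (z.re * w.re + z.im * w.im)) * (b ^ 2 + c ^ 2 - a ^ 2)
      = 0 := by
    exact_mod_cast hP
  have hPr : a ^ 4 + b ^ 4 + c ^ 4 + 6 * a ^ 2 * b ^ 2 + 6 * a ^ 2 * c ^ 2
        + 6 * b ^ 2 * c ^ 2
        - 4 * a * b * (a ^ 2 + b ^ 2 - c ^ 2) * z.re
        - 4 * a * c * (a ^ 2 + c ^ 2 - b ^ 2) * w.re
        - 4 * b * c * (b ^ 2 + c ^ 2 - a ^ 2) * (z.re * w.re + z.im * w.im) = 0 := by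
    linear_combination hPr0
  have hx : z.re ^ 2 + z.im ^ 2 = 1 := by
    have h := Complex.normSq_eq_norm_sq z
    rw [hz, Complex.normSq_apply] at h
    linear_combination h
  have hy : w.re ^ 2 + w.im ^ 2 = 1 := by
    have h := Complex.normSq_eq_norm_sq w
    rw [hw, Complex.normSq_apply] at h
    linear_combination h
  obtain ⟨hx1, hs0, hy1, hu0, hrel⟩ :=
    key_real a b c z.re z.im w.re w.im ha hb hc hx hy hPr
  exact ⟨Complex.ext (by simpa using hx1) (by simpa using hs0),
    Complex.ext (by simpa using hy1) (by simpa using hu0), hrel⟩
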